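/- For all n-element subsets S, T of {1,…,N}, the coefficient ⟨η(v_S), v_T⟩ of v_T in the expansion of η(v_S) in the basis {v_T} equals: m if S = T; 0 if |S ∩ T| < n−1; and (−1)^{x+y} if |S ∩ T| = n−1, where x is the unique element of S∖T and y is the unique element of T∖S. -/

import Mathlib

open Finset

/-- Number of inversions of a list. -/
def invCount {α : Type*} [LinearOrder α] (l : List α) : ℕ :=
  (Finset.univ.filter
    (fun p : Fin l.length × Fin l.length => p.1 < p.2 ∧ l.get p.2 < l.get p.1)).card

/-- The sign `(-1)^(number of inversions)` of the permutation sorting a list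
with pairwise distinct entries into increasing order. -/
noncomputable def invSign {α : Type*} [LinearOrder α] (l : List α) : ℂ :=
  (-1) ^ invCount l

/-- Replace the entry `a` by `b` (in place) in a list. -/
def replaceOne {α : Type*} [DecidableEq α] (l : List α) (a b : α) : List α :=
  l.map fun z => if z = a then b else z

open scoped Classical in
/-- Dirac delta: the basis vector corresponding to an index `r`. -/
noncomputable def delta {β : Type*} (r : β) : β → ℂ := fun r' => if r' = r then 1 else 0

/-- Index for the basis of ordered column tabloids of shape `(2^m, 1^{n-m})` on
`{1, …, n+m}` (identified with `Fin (n+m)`): such a tabloid is recorded by the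
set `T` of entries of its first column (the second column is the complement). -/
abbrev Col (n m : ℕ) := {T : Finset (Fin (n + m)) // T.card = n}

/-- The space `M̃` of column tabloids of shape `(2^m, 1^{n-m})`. -/
abbrev Mt (n m : ℕ) := Col n m → ℂ

lemma card_compl' {n m : ℕ} (T : Col n m) : (T.1ᶜ).card = m := by
  rw [Finset.card_compl, T.2, Fintype.card_fin]
  omega

/-- `yel T j` is the `(j+1)`-st smallest element of the complement of `T`
(i.e. of the second column). -/
noncomputable def yel {n m : ℕ} (T : Col n m) (j : Fin m) : Fin (n + m) :=
  (T.1ᶜ).orderEmbOfFin (card_compl' T) j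

lemma yel_not_mem {n m : ℕ} (T : Col n m) (j : Fin m) : yel T j ∉ T.1 :=
  Finset.mem_compl.mp (Finset.orderEmbOfFin_mem (T.1ᶜ) (card_compl' T) j)

/-- The first column obtained from `T` after exchanging `x ∈ T` with the
`(j+1)`-st smallest element of the complement. -/
noncomputable def swapSet {n m : ℕ} (T : Col n m) (x : Fin (n + m)) (j : Fin m) :
    Finset (Fin (n + m)) :=
  insert (yel T j) (T.1.erase x)

lemma swapSet_card {n m : ℕ} (T : Col n m) {x : Fin (n + m)} (hx : x ∈ T.1) (j : Fin m) :
    (swapSet T x j).card = n := by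
  have h0 : 0 < n := T.2 ▸ Finset.card_pos.mpr ⟨x, hx⟩
  rw [swapSet, Finset.card_insert_of_notMem
      (fun h => yel_not_mem T j (Finset.mem_of_mem_erase h)),
    Finset.card_erase_of_mem hx, T.2]
  omega

/-- `swap_{x,j}(T)`: the signed basis vector obtained from `T` by exchanging
`x` (in the first column) with the `(j+1)`-st entry of the second column in
place, the sign `ε` being the product of the signs of the two permutations
re-sorting the two columns. -/
noncomputable def swapTerm {n m : ℕ} (T : Col n m) (x : {a // a ∈ T.1}) (j : Fin m) :
    Mt n m :=
  (invSign (replaceOne (T.1.sort (· ≤ ·)) x.1 (yel T j)) *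
      invSign (replaceOne ((T.1ᶜ).sort (· ≤ ·)) (yel T j) x.1)) •
    delta (⟨swapSet T x.1 j, swapSet_card T x.2 j⟩ : Col n m)

/-- The operator `η` on the basis vector `v_T`. -/
noncomputable def etaBasis {n m : ℕ} (T : Col n m) : Mt n m :=
  (m : ℂ) • delta T - ∑ j : Fin m, ∑ x ∈ T.1.attach, swapTerm T x j

/-- The operator `η : M̃ → M̃`, extended linearly from the basis. -/
noncomputable def etaFun {n m : ℕ} (f : Mt n m) : Mt n m :=
  ∑ T : Col n m, f T • etaBasis T

/-- `η` as a linear map. -/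
noncomputable def etaLin (n m : ℕ) : Mt n m →ₗ[ℂ] Mt n m where
  toFun := etaFun
  map_add' f g := by
    simp [etaFun, add_smul, Finset.sum_add_distrib]
  map_smul' c f := by
    simp [etaFun, Finset.smul_sum, smul_smul]

/-- The sign picked up when re-sorting the two columns after relabelling by `σ`. -/
noncomputable def actSign {n m : ℕ} (σ : Equiv.Perm (Fin (n + m))) (T : Col n m) : ℂ :=
  invSign ((T.1.sort (· ≤ ·)).map ⇑σ) * invSign (((T.1ᶜ).sort (· ≤ ·)).map ⇑σ)

lemma image_card {n m : ℕ} (σ : Equiv.Perm (Fin (n + m))) (T : Col n m) :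
    (T.1.image ⇑σ).card = n := by
  rw [Finset.card_image_of_injective _ σ.injective, T.2]

/-- The (signed) action of `S_{n+m}` on the space of column tabloids:
`σ • v_T = sgn(sort₁) sgn(sort₂) v_{σ(T)}`, extended linearly. -/
noncomputable def act {n m : ℕ} (σ : Equiv.Perm (Fin (n + m))) (f : Mt n m) : Mt n m :=
  ∑ T : Col n m, f T •
    (actSign σ T • delta (⟨T.1.image ⇑σ, image_card σ T⟩ : Col n m))

section SpechtSide

variable (γ : Type*) [Fintype γ] [DecidableEq γ] (p q : ℕ)

/-- A bijective Young tableau of the two-column shape with column lengths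
`p` (first column) and `q` (second column), with entries in `γ`:
a bijection from the cells to the entries. -/
abbrev Tabl := (Fin p ⊕ Fin q) ≃ γ

/-- `rows` is a row tabloid of shape `(2^q, 1^{p-q})`: the first `q` rows are
unordered pairs, the remaining rows singletons, all pairwise disjoint
(together they then necessarily partition `γ`). -/
def IsRowTab (rows : Fin p → Finset γ) : Prop :=
  (∀ i, (rows i).card = if (i : ℕ) < q then 2 else 1) ∧
  ∀ i j, i ≠ j → Disjoint (rows i) (rows j)

/-- Row tabloids of shape `(2^q, 1^{p-q})`. -/
abbrev RowTab := {rows : Fin p → Finset γ // IsRowTab γ p q rows}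

/-- The permutation module `M^{(2^q,1^{p-q})}`, with basis the row tabloids. -/
abbrev MP := RowTab γ p q → ℂ

variable {γ p q}

/-- The rows of a tableau. -/
def rowsOf (t : Tabl γ p q) : Fin p → Finset γ := fun i =>
  if h : (i : ℕ) < q then {t (Sum.inl i), t (Sum.inr ⟨(i : ℕ), h⟩)}
  else {t (Sum.inl i)}

lemma mem_rowsOf {t : Tabl γ p q} {i : Fin p} {a : γ} (ha : a ∈ rowsOf t i) :
    a = t (Sum.inl i) ∨ ∃ h : (i : ℕ) < q, a = t (Sum.inr ⟨(i : ℕ), h⟩) := by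
  unfold rowsOf at ha
  split_ifs at ha with h
  · rcases Finset.mem_insert.mp ha with h1 | h1
    · exact Or.inl h1
    · exact Or.inr ⟨h, Finset.mem_singleton.mp h1⟩
  · exact Or.inl (Finset.mem_singleton.mp ha)

lemma isRowTab_rowsOf (t : Tabl γ p q) : IsRowTab γ p q (rowsOf t) := by
  constructor
  · intro i
    by_cases h : (i : ℕ) < q
    · rw [rowsOf, dif_pos h, if_pos h]
      exact Finset.card_pair (t.injective.ne (by simp))
    · rw [rowsOf, dif_neg h, if_neg h]
      exact Finset.card_singleton _
  · intro i j hij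
    rw [Finset.disjoint_left]
    intro a ha hb
    rcases mem_rowsOf ha with h1 | ⟨hi, h1⟩ <;> rcases mem_rowsOf hb with h2 | ⟨hj, h2⟩
    · exact hij (Sum.inl.inj (t.injective (h1.symm.trans h2)))
    · exact Sum.inl_ne_inr (t.injective (h1.symm.trans h2))
    · exact Sum.inr_ne_inl (t.injective (h1.symm.trans h2))
    · refine hij (Fin.ext ?_)
      have h3 := Sum.inr.inj (t.injective (h1.symm.trans h2))
      simpa using congrArg Fin.val h3

/-- The row tabloid `{t}` of a tableau `t`. -/
def rowTabOf (t : Tabl γ p q) : RowTab γ p q := ⟨rowsOf t, isRowTab_rowsOf t⟩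

/-- The column stabilizer `C_t` of a tableau: permutations preserving each
column setwise. -/
def colStab (t : Tabl γ p q) : Finset (Equiv.Perm γ) :=
  Finset.univ.filter fun σ =>
    (∀ i : Fin p, ∃ i' : Fin p, σ (t (Sum.inl i)) = t (Sum.inl i')) ∧
    (∀ j : Fin q, ∃ j' : Fin q, σ (t (Sum.inr j)) = t (Sum.inr j'))

/-- The polytabloid `ε_t = ∑_{β ∈ C_t} sgn(β) {β t}`. -/
noncomputable def polytab (t : Tabl γ p q) : MP γ p q :=
  ∑ σ ∈ colStab t, ((Equiv.Perm.sign σ : ℤ) : ℂ) • delta (rowTabOf (t.trans σ))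

variable (γ p q) in
/-- The Specht module `S^{(2^q,1^{p-q})}`: the span of all polytabloids. -/
noncomputable def SpechtMod : Submodule ℂ (MP γ p q) :=
  Submodule.span ℂ (Set.range (polytab (γ := γ) (p := p) (q := q)))

/-- The entrywise action of a permutation on a row tabloid. -/
def rowAct (σ : Equiv.Perm γ) (r : RowTab γ p q) : RowTab γ p q :=
  ⟨fun i => (r.1 i).image ⇑σ, by
    obtain ⟨h1, h2⟩ := r.2
    refine ⟨fun i => ?_, fun i j hij => ?_⟩
    · rw [Finset.card_image_of_injective _ σ.injective]; exact h1 i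
    · exact (Finset.disjoint_image σ.injective).mpr (h2 i j hij)⟩

/-- The entrywise `S_N`-action on the permutation module. -/
noncomputable def actP (σ : Equiv.Perm γ) (f : MP γ p q) : MP γ p q :=
  fun r => f (rowAct σ⁻¹ r)

end SpechtSide

/-- The tableau `t(T)` whose first column is `T` in increasing order and whose
second column is the complement of `T` in increasing order. -/
noncomputable def tabOf {n m : ℕ} (T : Col n m) : Tabl (Fin (n + m)) n m :=
  Equiv.ofBijective
    (Sum.elim (fun i => T.1.orderEmbOfFin T.2 i)
      (fun j => (T.1ᶜ).orderEmbOfFin (card_compl' T) j))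
    (by
      rw [Fintype.bijective_iff_injective_and_card]
      refine ⟨?_, by simp⟩
      rintro (i | i) (j | j) h <;> simp only [Sum.elim_inl, Sum.elim_inr] at h
      · exact congrArg Sum.inl ((T.1.orderEmbOfFin T.2).injective h)
      · have h1 := Finset.orderEmbOfFin_mem T.1 T.2 i
        have h2 := Finset.orderEmbOfFin_mem (T.1ᶜ) (card_compl' T) j
        rw [h] at h1
        simp only [Finset.mem_compl] at h2
        exact absurd h1 h2
      · have h1 := Finset.orderEmbOfFin_mem T.1 T.2 j
        have h2 := Finset.orderEmbOfFin_mem (T.1ᶜ) (card_compl' T) i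
        rw [← h] at h1
        simp only [Finset.mem_compl] at h2
        exact absurd h1 h2
      · exact congrArg Sum.inr (((T.1ᶜ).orderEmbOfFin (card_compl' T)).injective h))

/-- The `S_N`-equivariant map `α : M̃ → M^{(2^m,1^{n-m})}`, sending `v_T` to the
polytabloid `ε_{t(T)}` (its image is the Specht module). -/
noncomputable def alphaLin (n m : ℕ) : Mt n m →ₗ[ℂ] MP (Fin (n + m)) n m where
  toFun f := ∑ T : Col n m, f T • polytab (tabOf T)
  map_add' f g := by simp [add_smul, Finset.sum_add_distrib]
  map_smul' c f := by simp [Finset.smul_sum, smul_smul]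

/-- `φ(v_T)`, encoding the generalized Jacobi identity (for shape `(2^{n-1},1)`,
i.e. `n = m + 1`):
`φ(v_T) = v_T − ∑_{i=1}^n (−1)^{n−i} sgn(c_i) v_{Tᶜ ∪ {x_i}}` where
`x_i` is the `i`-th smallest element of `T` and `c_i` sorts `(y_1,…,y_{n−1},x_i)`. -/
noncomputable def phiBasis {n m : ℕ} (h : n = m + 1) (T : Col n m) : Mt n m :=
  delta T - ∑ i : Fin n,
    ((-1 : ℂ) ^ (n - 1 - (i : ℕ)) *
        invSign ((T.1ᶜ).sort (· ≤ ·) ++ [T.1.orderEmbOfFin T.2 i])) •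
      delta (⟨insert (T.1.orderEmbOfFin T.2 i) T.1ᶜ, by
        rw [Finset.card_insert_of_notMem (by
            simpa using Finset.orderEmbOfFin_mem T.1 T.2 i),
          card_compl']
        omega⟩ : Col n m)

/-- The map `φ : M̃ → M̃`, extended linearly; `ker φ ≅ ρ_{n,3}`. -/
noncomputable def phiFun {n m : ℕ} (h : n = m + 1) (f : Mt n m) : Mt n m :=
  ∑ T : Col n m, f T • phiBasis h T

/-- `φ` as a linear map. -/
noncomputable def phiLin (n m : ℕ) (h : n = m + 1) : Mt n m →ₗ[ℂ] Mt n m where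
  toFun := phiFun h
  map_add' f g := by simp [phiFun, add_smul, Finset.sum_add_distrib]
  map_smul' c f := by simp [phiFun, Finset.smul_sum, smul_smul]


section EtaAux

lemma invCount_replaceOne {α : Type*} [LinearOrder α] [DecidableEq α] {l : List α}
    (hl : l.Pairwise (· < ·)) {x y : α} (hx : x ∈ l) (hy : y ∉ l) :
    invCount (replaceOne l x y) =
      (l.toFinset.filter (fun z => min x y < z ∧ z < max x y)).card := by
  classical
  set l' : List α := replaceOne l x y with hl'
  have hlen : l'.length = l.length := by simp [hl', replaceOne]
  have hstrict : StrictMono l.get := hl.sortedLT.strictMono_get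
  have hcastinj : Function.Injective (Fin.cast hlen) := fun a b h =>
    Fin.ext (by simpa using congrArg Fin.val h)
  obtain ⟨p₀, hp₀⟩ : ∃ p : Fin l.length, l.get p = x := List.mem_iff_get.mp hx
  set p' : Fin l'.length := Fin.cast hlen.symm p₀ with hp'def
  have hp : l.get (Fin.cast hlen p') = x := hp₀
  clear hp₀
  have hget : ∀ i : Fin l'.length, l'.get i =
      if l.get (Fin.cast hlen i) = x then y else l.get (Fin.cast hlen i) := by
    intro i
    simp [hl', replaceOne, List.getElem_map]
  have hcastlt : ∀ i j : Fin l'.length, Fin.cast hlen i < Fin.cast hlen j ↔ i < j := by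
    intro i j; exact Iff.rfl
  have hne_get : ∀ i : Fin l'.length, i ≠ p' → l.get (Fin.cast hlen i) ≠ x := by
    intro i hi hcontra
    exact hi (hcastinj (hstrict.injective (hcontra.trans hp.symm)))
  have hfval : ∀ i : Fin l'.length, i ≠ p' → l'.get i = l.get (Fin.cast hlen i) := by
    intro i hi
    rw [hget, if_neg (hne_get i hi)]
  have hfvalp : l'.get p' = y := by
    rw [hget, if_pos hp]
  unfold invCount
  refine Finset.card_bij
    (fun q _ => if q.1 = p' then l.get (Fin.cast hlen q.2) else l.get (Fin.cast hlen q.1))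
    ?_ ?_ ?_
  · rintro ⟨i, j⟩ hq
    simp only [Finset.mem_filter, Finset.mem_univ, true_and] at hq
    obtain ⟨hij, hval⟩ := hq
    have hijne : i ≠ j := ne_of_lt hij
    by_cases hip : i = p'
    · have hjp : j ≠ p' := fun h => hijne (hip.trans h.symm)
      show (if i = p' then _ else _) ∈ _
      rw [if_pos hip]
      have h2 : l.get (Fin.cast hlen j) < y := by
        rw [← hfval j hjp, ← hfvalp, ← hip]; exact hval
      have h3 : x < l.get (Fin.cast hlen j) := by
        rw [← hp]; exact hstrict ((hcastlt _ _).mpr (hip ▸ hij))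
      have hxy : x < y := lt_trans h3 h2
      simp only [Finset.mem_filter, List.mem_toFinset]
      exact ⟨List.mem_iff_get.mpr ⟨_, rfl⟩,
        by rw [min_eq_left hxy.le]; exact h3,
        by rw [max_eq_right hxy.le]; exact h2⟩
    · have hjp : j = p' := by
        by_contra hjp
        rw [hfval i hip, hfval j hjp] at hval
        exact absurd (hstrict ((hcastlt i j).mpr hij)) (not_lt.mpr hval.le)
      show (if i = p' then _ else _) ∈ _
      rw [if_neg hip]
      have h2 : y < l.get (Fin.cast hlen i) := by
        rw [← hfval i hip, ← hfvalp, ← hjp]; exact hval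
      have h3 : l.get (Fin.cast hlen i) < x := by
        rw [← hp]; exact hstrict ((hcastlt _ _).mpr (hjp ▸ hij))
      have hxy : y < x := lt_trans h2 h3
      simp only [Finset.mem_filter, List.mem_toFinset]
      exact ⟨List.mem_iff_get.mpr ⟨_, rfl⟩,
        by rw [min_eq_right hxy.le]; exact h2,
        by rw [max_eq_left hxy.le]; exact h3⟩
  · rintro ⟨i, j⟩ hq ⟨i', j'⟩ hq' heq
    simp only [Finset.mem_filter, Finset.mem_univ, true_and] at hq hq'
    obtain ⟨hij, hval⟩ := hq
    obtain ⟨hij', hval'⟩ := hq'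
    have hcase : ∀ (a b : Fin l'.length), a < b → l'.get b < l'.get a →
        (a = p' ∧ b ≠ p') ∨ (a ≠ p' ∧ b = p') := by
      intro a b hab hba
      by_cases hap : a = p'
      · exact Or.inl ⟨hap, fun h => (ne_of_lt hab) (hap.trans h.symm)⟩
      · refine Or.inr ⟨hap, ?_⟩
        by_contra hbp
        rw [hfval a hap, hfval b hbp] at hba
        exact absurd (hstrict ((hcastlt a b).mpr hab)) (not_lt.mpr hba.le)
    have key : ∀ (a b : Fin l'.length), a < b → a = p' →
        x < l.get (Fin.cast hlen b) := by
      intro a b hab hap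
      rw [← hp]
      exact hstrict ((hcastlt _ _).mpr (hap ▸ hab))
    have key2 : ∀ (a b : Fin l'.length), a < b → b = p' →
        l.get (Fin.cast hlen a) < x := by
      intro a b hab hbp
      rw [← hp]
      exact hstrict ((hcastlt _ _).mpr (hbp ▸ hab))
    change (if i = p' then _ else _) = (if i' = p' then _ else _) at heq
    rcases hcase i j hij hval with ⟨h1, h2⟩ | ⟨h1, h2⟩ <;>
      rcases hcase i' j' hij' hval' with ⟨h1', h2'⟩ | ⟨h1', h2'⟩
    · rw [if_pos h1, if_pos h1'] at heq
      exact Prod.ext (h1.trans h1'.symm) (hcastinj (hstrict.injective heq))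
    · rw [if_pos h1, if_neg h1'] at heq
      have hxlt := key i j hij h1
      have hltx := key2 i' j' hij' h2'
      rw [heq] at hxlt
      exact absurd hltx (not_lt.mpr hxlt.le)
    · rw [if_neg h1, if_pos h1'] at heq
      have hxlt := key i' j' hij' h1'
      have hltx := key2 i j hij h2
      rw [← heq] at hxlt
      exact absurd hltx (not_lt.mpr hxlt.le)
    · rw [if_neg h1, if_neg h1'] at heq
      exact Prod.ext (hcastinj (hstrict.injective heq)) (h2.trans h2'.symm)
  · intro z hz
    simp only [Finset.mem_filter, List.mem_toFinset] at hz
    obtain ⟨hzl, hz1, hz2⟩ := hz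
    obtain ⟨i, hi⟩ : ∃ i : Fin l.length, l.get i = z := List.mem_iff_get.mp hzl
    have hzy : z ≠ y := fun h => hy (h ▸ hzl)
    set i' : Fin l'.length := Fin.cast hlen.symm i with hi'def
    have hcasti : Fin.cast hlen i' = i := rfl
    rcases lt_trichotomy x y with hxy | hxy | hxy
    · rw [min_eq_left hxy.le] at hz1
      rw [max_eq_right hxy.le] at hz2
      have hzx : z ≠ x := ne_of_gt hz1
      have hip : i' ≠ p' := by
        intro h
        exact hzx (hi ▸ hp ▸ congrArg (fun t => l.get (Fin.cast hlen t)) h)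
      refine ⟨(p', i'), ?_, ?_⟩
      · simp only [Finset.mem_filter, Finset.mem_univ, true_and]
        refine ⟨?_, ?_⟩
        · rw [← hcastlt, hcasti]
          exact hstrict.lt_iff_lt.mp (by rw [hp, hi]; exact hz1)
        · rw [hfvalp, hfval i' hip, hcasti, hi]
          exact hz2
      · show (if p' = p' then _ else _) = z
        rw [if_pos rfl, hcasti, hi]
    · exact absurd (hxy ▸ hx) hy
    · rw [min_eq_right hxy.le] at hz1
      rw [max_eq_left hxy.le] at hz2
      have hzx : z ≠ x := ne_of_lt hz2
      have hip : i' ≠ p' := by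
        intro h
        exact hzx (hi ▸ hp ▸ congrArg (fun t => l.get (Fin.cast hlen t)) h)
      refine ⟨(i', p'), ?_, ?_⟩
      · simp only [Finset.mem_filter, Finset.mem_univ, true_and]
        refine ⟨?_, ?_⟩
        · rw [← hcastlt, hcasti]
          exact hstrict.lt_iff_lt.mp (by rw [hp, hi]; exact hz2)
        · rw [hfvalp, hfval i' hip, hcasti, hi]
          exact hz1
      · show (if i' = p' then _ else _) = z
        rw [if_neg hip, hcasti, hi]

lemma sign_product {k : ℕ} {A : Finset (Fin k)} {x y : Fin k}
    (hx : x ∈ A) (hy : y ∉ A) :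
    invSign (replaceOne (A.sort (· ≤ ·)) x y) *
      invSign (replaceOne ((Aᶜ).sort (· ≤ ·)) y x) =
      (-1 : ℂ) ^ ((x : ℕ) + (y : ℕ) + 1) := by
  classical
  have hxc : x ∉ Aᶜ := by simp [hx]
  have hyc : y ∈ Aᶜ := by simp [hy]
  have h1 := invCount_replaceOne (A.sortedLT_sort.pairwise)
    ((Finset.mem_sort _).mpr hx) (fun h => hy ((Finset.mem_sort _).mp h))
  have h2 := invCount_replaceOne ((Aᶜ).sortedLT_sort.pairwise)
    ((Finset.mem_sort _).mpr hyc) (fun h => hxc ((Finset.mem_sort _).mp h))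
  rw [Finset.sort_toFinset] at h1 h2
  rw [min_comm y x, max_comm y x] at h2
  set P : Fin k → Prop := fun z => min x y < z ∧ z < max x y with hP
  have hsum : (A.filter P).card + ((Aᶜ).filter P).card =
      (Finset.Ioo (min x y) (max x y)).card := by
    rw [← Finset.card_union_of_disjoint
      (Finset.disjoint_filter_filter disjoint_compl_right),
      ← Finset.filter_union, Finset.union_compl]
    congr 1
    ext z
    simp [hP, Finset.mem_Ioo]
  have hxyne : x ≠ y := fun h => hy (h ▸ hx)
  have hcard : (Finset.Ioo (min x y) (max x y)).card % 2 = ((x : ℕ) + (y : ℕ) + 1) % 2 := by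
    rcases lt_trichotomy x y with h | h | h
    · rw [min_eq_left h.le, max_eq_right h.le, Fin.card_Ioo]
      have : (x : ℕ) < (y : ℕ) := h
      omega
    · exact absurd h hxyne
    · rw [min_eq_right h.le, max_eq_left h.le, Fin.card_Ioo]
      have : (y : ℕ) < (x : ℕ) := h
      omega
  rw [invSign, invSign, h1, h2, ← pow_add, hsum,
    neg_one_pow_eq_pow_mod_two, hcard, ← neg_one_pow_eq_pow_mod_two]

lemma delta_eq_one {β : Type*} (r : β) : delta r r = 1 := if_pos rfl

lemma delta_eq_zero {β : Type*} {r r' : β} (h : r' ≠ r) : delta r r' = 0 := if_neg h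

lemma etaFun_delta {n m : ℕ} (S T : Col n m) :
    etaFun (delta S) T = etaBasis S T := by
  classical
  show (∑ U : Col n m, delta S U • etaBasis U) T = _
  rw [Finset.sum_apply]
  have h : ∀ U : Col n m, (delta S U • etaBasis U) T =
      if U = S then etaBasis S T else 0 := by
    intro U
    by_cases hU : U = S
    · subst hU; rw [if_pos rfl, Pi.smul_apply, delta_eq_one, one_smul]
    · rw [if_neg hU, Pi.smul_apply, delta_eq_zero hU, zero_smul]
  rw [Finset.sum_congr rfl (fun U _ => h U), Finset.sum_ite_eq']
  rw [if_pos (Finset.mem_univ S)]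

lemma etaBasis_apply {n m : ℕ} (S T : Col n m) :
    etaBasis S T = (m : ℂ) * delta S T -
      ∑ j : Fin m, ∑ x ∈ S.1.attach, swapTerm S x j T := by
  simp only [etaBasis, Pi.sub_apply, Pi.smul_apply, smul_eq_mul, Finset.sum_apply]

lemma swapTerm_apply_ne {n m : ℕ} {S T : Col n m} {x : {a // a ∈ S.1}} {j : Fin m}
    (h : T.1 ≠ swapSet S x.1 j) : swapTerm S x j T = 0 := by
  rw [swapTerm, Pi.smul_apply, smul_eq_mul,
    delta_eq_zero (fun hc => h (congrArg Subtype.val hc)), mul_zero]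

lemma swapTerm_apply_eq {n m : ℕ} {S T : Col n m} {x : {a // a ∈ S.1}} {j : Fin m}
    (h : T.1 = swapSet S x.1 j) :
    swapTerm S x j T =
      invSign (replaceOne (S.1.sort (· ≤ ·)) x.1 (yel S j)) *
        invSign (replaceOne ((S.1ᶜ).sort (· ≤ ·)) (yel S j) x.1) := by
  rw [swapTerm, Pi.smul_apply, smul_eq_mul,
    show delta (⟨swapSet S x.1 j, swapSet_card S x.2 j⟩ : Col n m) T = 1 from
      if_pos (Subtype.ext h), mul_one]

lemma insert_erase_eq_iff {k : ℕ} {A : Finset (Fin k)} {x x' y y' : Fin k}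
    (hx : x ∈ A) (hx' : x' ∈ A) (hy : y ∉ A) (hy' : y' ∉ A) :
    insert y (A.erase x) = insert y' (A.erase x') ↔ y = y' ∧ x = x' := by
  constructor
  · intro h
    have hyy : y = y' := by
      have hmem : y ∈ insert y' (A.erase x') := h ▸ Finset.mem_insert_self y _
      rcases Finset.mem_insert.mp hmem with h1 | h1
      · exact h1
      · exact (hy (Finset.mem_of_mem_erase h1)).elim
    refine ⟨hyy, ?_⟩
    by_contra hxx
    have h1 : x ∉ insert y (A.erase x) := by
      intro hc
      rcases Finset.mem_insert.mp hc with h2 | h2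
      · exact hy (h2 ▸ hx)
      · exact (Finset.mem_erase.mp h2).1 rfl
    have h2 : x ∈ insert y' (A.erase x') :=
      Finset.mem_insert.mpr (Or.inr (Finset.mem_erase.mpr ⟨hxx, hx⟩))
    rw [h] at h1
    exact h1 h2
  · rintro ⟨rfl, rfl⟩; rfl

lemma sum_eq_of_eq_zero {β : Type*} [Fintype β] (G : β → ℂ) (b : β)
    (h : ∀ j, j ≠ b → G j = 0) : ∑ j : β, G j = G b :=
  Finset.sum_eq_single b (fun j _ hj => h j hj)
    (fun h' => absurd (Finset.mem_univ b) h')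

lemma sum_attach_eq {α : Type*} (s : Finset α) (g : {a // a ∈ s} → ℂ) (a : α)
    (ha : a ∈ s) (h : ∀ x' ∈ s.attach, x' ≠ ⟨a, ha⟩ → g x' = 0) :
    ∑ x' ∈ s.attach, g x' = g ⟨a, ha⟩ :=
  Finset.sum_eq_single_of_mem _ (Finset.mem_attach _ _) h

end EtaAux

/-- The coefficient `⟨η(v_S), v_T⟩` equals `m` if `S = T`,
`0` if `|S ∩ T| < n - 1`, and `(-1)^{x+y}` if `|S ∩ T| = n - 1`, where `x` is the
unique element of `S \ T` and `y` the unique element of `T \ S` (elements of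
`Fin (n+m)` are identified with `{1, …, n+m}` via `x ↦ x + 1`). -/
theorem eta_coefficients (n m : ℕ) (hm : 1 ≤ m) (hmn : m ≤ n) (S T : Col n m) :
    (S = T → etaFun (delta S) T = (m : ℂ)) ∧
    ((S.1 ∩ T.1).card < n - 1 → etaFun (delta S) T = 0) ∧
    ((S.1 ∩ T.1).card = n - 1 →
      ∀ x ∈ S.1 \ T.1, ∀ y ∈ T.1 \ S.1,
        etaFun (delta S) T = (-1 : ℂ) ^ (((x : ℕ) + 1) + ((y : ℕ) + 1))) := by
  classical
  have hn1 : 1 ≤ n := le_trans hm hmn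
  refine ⟨?_, ?_, ?_⟩
  · intro h
    cases h
    rw [etaFun_delta, etaBasis_apply, delta_eq_one]
    have hz : ∀ j : Fin m, ∀ x ∈ S.1.attach, swapTerm S x j S = 0 := by
      intro j x _
      apply swapTerm_apply_ne
      intro hcnd
      exact yel_not_mem S j (by rw [hcnd, swapSet]; exact Finset.mem_insert_self _ _)
    rw [Finset.sum_congr rfl (fun j _ => Finset.sum_eq_zero (hz j)),
      Finset.sum_const_zero]
    ring
  · intro hlt
    have hTS : T ≠ S := by
      intro h
      rw [h, Finset.inter_self, S.2] at hlt
      omega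
    rw [etaFun_delta, etaBasis_apply, delta_eq_zero hTS]
    have hz : ∀ j : Fin m, ∀ x ∈ S.1.attach, swapTerm S x j T = 0 := by
      intro j x _
      apply swapTerm_apply_ne
      intro hcnd
      have hint : S.1 ∩ T.1 = S.1.erase x.1 := by
        rw [hcnd, swapSet]
        ext z
        simp only [Finset.mem_inter, Finset.mem_insert, Finset.mem_erase]
        constructor
        · rintro ⟨hzS, rfl | ⟨hzx, _⟩⟩
          · exact absurd hzS (yel_not_mem S j)
          · exact ⟨hzx, hzS⟩
        · rintro ⟨hzx, hzS⟩
          exact ⟨hzS, Or.inr ⟨hzx, hzS⟩⟩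
      rw [hint, Finset.card_erase_of_mem x.2, S.2] at hlt
      omega
    rw [Finset.sum_congr rfl (fun j _ => Finset.sum_eq_zero (hz j)),
      Finset.sum_const_zero]
    ring
  · intro hc x hx y hy
    obtain ⟨hxS, hxT⟩ := Finset.mem_sdiff.mp hx
    obtain ⟨hyT, hyS⟩ := Finset.mem_sdiff.mp hy
    have hTS : T ≠ S := fun h => hyS (h ▸ hyT)
    have hSdT : S.1 \ T.1 = {x} := by
      have h1 := Finset.card_sdiff_add_card_inter S.1 T.1
      rw [hc, S.2] at h1
      have h2 : (S.1 \ T.1).card = 1 := by omega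
      obtain ⟨a, ha⟩ := Finset.card_eq_one.mp h2
      rw [ha] at hx ⊢
      rw [Finset.mem_singleton.mp hx]
    have hTdS : T.1 \ S.1 = {y} := by
      have h1 := Finset.card_sdiff_add_card_inter T.1 S.1
      rw [Finset.inter_comm, hc, T.2] at h1
      have h2 : (T.1 \ S.1).card = 1 := by omega
      obtain ⟨a, ha⟩ := Finset.card_eq_one.mp h2
      rw [ha] at hy ⊢
      rw [Finset.mem_singleton.mp hy]
    have hT1 : T.1 = insert y (S.1.erase x) := by
      ext z
      simp only [Finset.mem_insert, Finset.mem_erase]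
      constructor
      · intro hz
        by_cases hzS : z ∈ S.1
        · exact Or.inr ⟨fun h => hxT (h ▸ hz), hzS⟩
        · exact Or.inl (Finset.mem_singleton.mp
            (hTdS ▸ Finset.mem_sdiff.mpr ⟨hz, hzS⟩))
      · rintro (rfl | ⟨hzx, hzS⟩)
        · exact hyT
        · by_contra hzT
          exact hzx (Finset.mem_singleton.mp
            (hSdT ▸ Finset.mem_sdiff.mpr ⟨hzS, hzT⟩))
    obtain ⟨j₀, hj₀⟩ : ∃ j : Fin m, yel S j = y := by
      have hr := Finset.range_orderEmbOfFin (S.1ᶜ) (card_compl' S)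
      have hmem : y ∈ Set.range ⇑((S.1ᶜ).orderEmbOfFin (card_compl' S)) := by
        rw [hr]; exact Finset.mem_coe.mpr (Finset.mem_compl.mpr hyS)
      obtain ⟨j, hj⟩ := hmem
      exact ⟨j, hj⟩
    have hcond : ∀ (x' : {a // a ∈ S.1}) (j : Fin m),
        T.1 = swapSet S x'.1 j ↔ (yel S j = y ∧ x'.1 = x) := by
      intro x' j
      rw [hT1, swapSet, insert_erase_eq_iff hxS x'.2 hyS (yel_not_mem S j)]
      constructor
      · rintro ⟨h1, h2⟩; exact ⟨h1.symm, h2.symm⟩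
      · rintro ⟨h1, h2⟩; exact ⟨h1.symm, h2.symm⟩
    have hinner : ∀ x' ∈ S.1.attach, x' ≠ ⟨x, hxS⟩ → swapTerm S x' j₀ T = 0 := by
      intro x' _ hx'
      apply swapTerm_apply_ne
      intro hcnd
      obtain ⟨_, h2⟩ := (hcond x' j₀).mp hcnd
      exact hx' (Subtype.ext h2)
    have houter : ∀ j ∈ (Finset.univ : Finset (Fin m)), j ≠ j₀ →
        (∑ x' ∈ S.1.attach, swapTerm S x' j T) = 0 := by
      intro j _ hj
      apply Finset.sum_eq_zero
      intro x' _
      apply swapTerm_apply_ne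
      intro hcnd
      obtain ⟨h1, _⟩ := (hcond x' j).mp hcnd
      exact hj (((S.1ᶜ).orderEmbOfFin (card_compl' S)).injective
        (h1.trans hj₀.symm))
    have hsum : ∑ j : Fin m, ∑ x' ∈ S.1.attach, swapTerm S x' j T
        = swapTerm S ⟨x, hxS⟩ j₀ T := by
      refine (sum_eq_of_eq_zero _ j₀
        (fun j hj => houter j (Finset.mem_univ j) hj)).trans ?_
      exact sum_attach_eq S.1 _ x hxS hinner
    have hval : swapTerm S ⟨x, hxS⟩ j₀ T = (-1 : ℂ) ^ ((x : ℕ) + (y : ℕ) + 1) := by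
      rw [swapTerm_apply_eq ((hcond ⟨x, hxS⟩ j₀).mpr ⟨hj₀, rfl⟩), hj₀]
      exact sign_product hxS hyS
    rw [etaFun_delta, etaBasis_apply, delta_eq_zero hTS, hsum, hval]
    have hexp : (x : ℕ) + 1 + ((y : ℕ) + 1) = ((x : ℕ) + (y : ℕ) + 1) + 1 := by ring
    rw [hexp, pow_succ]
    ring
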